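/- arXiv:2512.22902 — 6 statements merged into one kernel-verified Lean document; each statement's English description precedes it below -/
import Mathlib

section
/- Let n be a nonzero integer that is not a perfect square and let Q be an integral binary quadratic form of discriminant 4n. Then for every real T > 0 one has D_T^Q = F_T^Q; that is, the map sending a D(n)-pair {a,c} with a > c to the form [a, 2√(ac+n), c] is a bijection between the set of D(n)-pairs {a,c} with a,c ∈ {−T,…,T} and E_{ac} ∼ Q, and the set of integral binary quadratic forms [a,b,c] with |a| ≤ T, |c| ≤ T, a > c, b ≥ 0 and [a,b,c] ∼ Q. -/
open Filter Real Asymptotics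

/-- The substitution action of `SL₂(ℤ)` on integral binary quadratic forms, where a form
`a x² + b x y + c y²` is encoded as the triple `(a, b, c)`: for `g = (p q; r s)` the form
`g • Q` is `(x, y) ↦ Q (p x + q y, r x + s y)`. -/
def actForm (g : Matrix.SpecialLinearGroup (Fin 2) ℤ) (Q : ℤ × ℤ × ℤ) : ℤ × ℤ × ℤ :=
  let p := (g : Matrix (Fin 2) (Fin 2) ℤ) 0 0
  let q := (g : Matrix (Fin 2) (Fin 2) ℤ) 0 1
  let r := (g : Matrix (Fin 2) (Fin 2) ℤ) 1 0
  let s := (g : Matrix (Fin 2) (Fin 2) ℤ) 1 1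
  (Q.1 * p ^ 2 + Q.2.1 * p * r + Q.2.2 * r ^ 2,
   2 * Q.1 * p * q + Q.2.1 * (p * s + q * r) + 2 * Q.2.2 * r * s,
   Q.1 * q ^ 2 + Q.2.1 * q * s + Q.2.2 * s ^ 2)

/-- Proper (`SL₂(ℤ)`) equivalence of integral binary quadratic forms. -/
def ProperEquiv (Q Q' : ℤ × ℤ × ℤ) : Prop := ∃ g, actForm g Q = Q'

/-- `DTQ n Q T` is the number of `D(n)`-pairs `{a, c}` (written with `a > c`) with
`a, c ∈ {-T, …, T}` whose associated form `E_{ac} = [a, 2√(ac+n), c]` is properly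
equivalent to `Q`. -/
noncomputable def DTQ (n : ℤ) (Q : ℤ × ℤ × ℤ) (T : ℝ) : ℕ :=
  Set.ncard {ac : ℤ × ℤ | ac.2 < ac.1 ∧ ac.1 ≠ 0 ∧ ac.2 ≠ 0 ∧
    |(ac.1 : ℝ)| ≤ T ∧ |(ac.2 : ℝ)| ≤ T ∧
    ∃ b : ℤ, 0 ≤ b ∧ b ^ 2 = ac.1 * ac.2 + n ∧ ProperEquiv (ac.1, 2 * b, ac.2) Q}

/-- `FTQ Q T` is the number of integral binary quadratic forms `[a, b, c]` with
`|a| ≤ T`, `|c| ≤ T`, `a > c`, `b ≥ 0` which are properly equivalent to `Q`. -/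
noncomputable def FTQ (Q : ℤ × ℤ × ℤ) (T : ℝ) : ℕ :=
  Set.ncard {f : ℤ × ℤ × ℤ | |(f.1 : ℝ)| ≤ T ∧ |(f.2.2 : ℝ)| ≤ T ∧
    f.2.2 < f.1 ∧ 0 ≤ f.2.1 ∧ ProperEquiv f Q}

/-- `ω(d)`: the number of `SL₂(ℤ)`-automorphs of a primitive definite form of
discriminant `d`. -/
def omegaDisc (d : ℤ) : ℕ := if d = -4 then 4 else if d = -3 then 6 else 2

lemma disc_actForm (g : Matrix.SpecialLinearGroup (Fin 2) ℤ) (Q : ℤ × ℤ × ℤ) :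
    (actForm g Q).2.1 ^ 2 - 4 * (actForm g Q).1 * (actForm g Q).2.2 =
      Q.2.1 ^ 2 - 4 * Q.1 * Q.2.2 := by
  have hdet : (g : Matrix (Fin 2) (Fin 2) ℤ) 0 0 * (g : Matrix (Fin 2) (Fin 2) ℤ) 1 1 -
      (g : Matrix (Fin 2) (Fin 2) ℤ) 0 1 * (g : Matrix (Fin 2) (Fin 2) ℤ) 1 0 = 1 := by
    have := g.property
    rwa [Matrix.det_fin_two] at this
  simp only [actForm]
  linear_combination (Q.2.1 ^ 2 - 4 * Q.1 * Q.2.2) *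
    ((g : Matrix (Fin 2) (Fin 2) ℤ) 0 0 * (g : Matrix (Fin 2) (Fin 2) ℤ) 1 1 -
      (g : Matrix (Fin 2) (Fin 2) ℤ) 0 1 * (g : Matrix (Fin 2) (Fin 2) ℤ) 1 0 + 1) * hdet

lemma disc_properEquiv {Q Q' : ℤ × ℤ × ℤ} (h : ProperEquiv Q Q') :
    Q.2.1 ^ 2 - 4 * Q.1 * Q.2.2 = Q'.2.1 ^ 2 - 4 * Q'.1 * Q'.2.2 := by
  obtain ⟨g, rfl⟩ := h
  exact (disc_actForm g Q).symm

/-- For a nonzero nonsquare integer `n` and a form `Q` of discriminant `4n`, the map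
`{a,c} ↦ [a, 2√(ac+n), c]` is a bijection between the `D(n)`-pairs counted by `D_T^Q`
and the forms counted by `F_T^Q`; in particular `D_T^Q = F_T^Q` for every `T > 0`. -/
theorem DTQ_eq_FTQ (n : ℤ) (hn : n ≠ 0) (hns : ¬∃ m : ℤ, n = m ^ 2)
    (Q : ℤ × ℤ × ℤ) (hdisc : Q.2.1 ^ 2 - 4 * Q.1 * Q.2.2 = 4 * n)
    (T : ℝ) (hT : 0 < T) :
    Set.BijOn (fun ac : ℤ × ℤ => (ac.1, 2 * Int.sqrt (ac.1 * ac.2 + n), ac.2))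
        {ac : ℤ × ℤ | ac.2 < ac.1 ∧ ac.1 ≠ 0 ∧ ac.2 ≠ 0 ∧
          |(ac.1 : ℝ)| ≤ T ∧ |(ac.2 : ℝ)| ≤ T ∧
          ∃ b : ℤ, 0 ≤ b ∧ b ^ 2 = ac.1 * ac.2 + n ∧ ProperEquiv (ac.1, 2 * b, ac.2) Q}
        {f : ℤ × ℤ × ℤ | |(f.1 : ℝ)| ≤ T ∧ |(f.2.2 : ℝ)| ≤ T ∧
          f.2.2 < f.1 ∧ 0 ≤ f.2.1 ∧ ProperEquiv f Q} ∧
      DTQ n Q T = FTQ Q T := by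
  have hsqrt : ∀ b : ℤ, 0 ≤ b → Int.sqrt (b ^ 2) = b := by
    intro b hb
    rw [sq, Int.sqrt_eq, Int.natAbs_of_nonneg hb]
  have hbij : Set.BijOn (fun ac : ℤ × ℤ => (ac.1, 2 * Int.sqrt (ac.1 * ac.2 + n), ac.2))
      {ac : ℤ × ℤ | ac.2 < ac.1 ∧ ac.1 ≠ 0 ∧ ac.2 ≠ 0 ∧
        |(ac.1 : ℝ)| ≤ T ∧ |(ac.2 : ℝ)| ≤ T ∧
        ∃ b : ℤ, 0 ≤ b ∧ b ^ 2 = ac.1 * ac.2 + n ∧ ProperEquiv (ac.1, 2 * b, ac.2) Q}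
      {f : ℤ × ℤ × ℤ | |(f.1 : ℝ)| ≤ T ∧ |(f.2.2 : ℝ)| ≤ T ∧
        f.2.2 < f.1 ∧ 0 ≤ f.2.1 ∧ ProperEquiv f Q} := by
    refine ⟨?_, ?_, ?_⟩
    · rintro ⟨a, c⟩ ⟨hlt, ha, hc, haT, hcT, b, hb0, hb2, heq⟩
      have hs : Int.sqrt (a * c + n) = b := by rw [← hb2, hsqrt b hb0]
      simp only [Set.mem_setOf_eq, hs]
      exact ⟨haT, hcT, hlt, by linarith, heq⟩
    · rintro ⟨a, c⟩ ⟨_, _, _, _, _, b, hb0, hb2, _⟩ ⟨a', c'⟩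
        ⟨_, _, _, _, _, b', hb0', hb2', _⟩ h
      simp only [Prod.mk.injEq] at h
      exact Prod.ext h.1 h.2.2
    · rintro ⟨a, b, c⟩ ⟨haT, hcT, hlt, hb0, heq⟩
      simp only at haT hcT hlt hb0 heq
      have hdf : b ^ 2 - 4 * a * c = 4 * n := by
        have := disc_properEquiv heq
        simp only at this
        omega
      have hbe : 2 ∣ b := by
        have h4 : (4 : ℤ) ∣ b ^ 2 := ⟨n + a * c, by linarith⟩
        have h2 : (2 : ℤ) ∣ b ^ 2 := dvd_trans ⟨2, rfl⟩ h4
        exact Int.prime_two.dvd_of_dvd_pow h2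
      obtain ⟨b', rfl⟩ := hbe
      have hb'0 : 0 ≤ b' := by linarith
      have hb'2 : b' ^ 2 = a * c + n := by linarith [hdf]
      have ha : a ≠ 0 := by
        rintro rfl
        exact hns ⟨b', by simpa using hb'2.symm⟩
      have hc : c ≠ 0 := by
        rintro rfl
        exact hns ⟨b', by simpa using hb'2.symm⟩
      refine ⟨(a, c), ⟨hlt, ha, hc, haT, hcT, b', hb'0, hb'2, heq⟩, ?_⟩
      show (a, 2 * Int.sqrt (a * c + n), c) = (a, 2 * b', c)
      rw [← hb'2, hsqrt b' hb'0]
  refine ⟨hbij, ?_⟩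
  unfold DTQ FTQ
  rw [← hbij.image_eq]
  exact (Set.ncard_image_of_injOn hbij.injOn).symm
end

section
/- For M ≥ 1 define I(M) = ∫_{1/M}^{M} (√(y(M−y)) − √(max(1−y², 0)))/y² dy. Then I(M)/M → 1 as M → ∞; that is, I(M) = M + o(M). -/
open Filter Real MeasureTheory intervalIntegral Set

lemma intA {M : ℝ} (hM : 2 ≤ M) :
    ∫ y in (1 / M)..M, Real.sqrt (y * (M - y)) / y ^ 2
      = 2 * Real.sqrt (M ^ 2 - 1) - 2 * Real.arctan (Real.sqrt (M ^ 2 - 1)) := by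
  have hM0 : (0:ℝ) < M := by linarith
  have hle : 1 / M ≤ M := by
    rw [div_le_iff₀ hM0]; nlinarith
  have hinv : (0:ℝ) < 1 / M := by positivity
  set G : ℝ → ℝ := fun y => 2 * Real.arctan (Real.sqrt (M / y - 1)) - 2 * Real.sqrt (M / y - 1) with hG
  have hc0 : ContinuousOn (fun y : ℝ => M / y - 1) (Icc (1/M) M) :=
    (continuousOn_const.div continuousOn_id (fun y hy =>
      ne_of_gt (lt_of_lt_of_le hinv hy.1))).sub continuousOn_const
  have hcont : ContinuousOn G (Icc (1/M) M) :=
    (continuousOn_const.mul (Real.continuous_arctan.comp_continuousOn hc0.sqrt)).sub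
      (continuousOn_const.mul hc0.sqrt)
  have hderiv : ∀ y ∈ Ioo (1/M) M, HasDerivAt G (Real.sqrt (y * (M - y)) / y ^ 2) y := by
    intro y hy
    have hy0 : (0:ℝ) < y := lt_of_lt_of_le hinv (le_of_lt hy.1)
    have hu : 0 < M / y - 1 := by
      rw [sub_pos, lt_div_iff₀ hy0]; linarith [hy.2]
    set s := Real.sqrt (M / y - 1) with hs
    have hs0 : 0 < s := Real.sqrt_pos.mpr hu
    have hs2 : s ^ 2 = M / y - 1 := Real.sq_sqrt hu.le
    have h1 : HasDerivAt (fun y : ℝ => M / y - 1) ((0 * y - M * 1) / y ^ 2) y :=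
      ((hasDerivAt_const y M).div (hasDerivAt_id y) (ne_of_gt hy0)).sub_const 1
    have h2 : HasDerivAt (fun y : ℝ => Real.sqrt (M / y - 1))
        ((0 * y - M * 1) / y ^ 2 / (2 * s)) y := h1.sqrt (ne_of_gt hu)
    have h3 : HasDerivAt (fun y : ℝ => Real.arctan (Real.sqrt (M / y - 1)))
        (1 / (1 + s ^ 2) * ((0 * y - M * 1) / y ^ 2 / (2 * s))) y := h2.arctan
    have h4 : HasDerivAt G
        (2 * (1 / (1 + s ^ 2) * ((0 * y - M * 1) / y ^ 2 / (2 * s)))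
          - 2 * ((0 * y - M * 1) / y ^ 2 / (2 * s))) y :=
      (h3.const_mul 2).sub (h2.const_mul 2)
    convert h4 using 1
    have hsq : Real.sqrt (y * (M - y)) = y * s := by
      rw [hs, ← Real.sqrt_sq hy0.le, ← Real.sqrt_mul (sq_nonneg y)]
      congr 1
      field_simp
      rw [Real.sqrt_sq hy0.le]
    have hs2' : s ^ 2 * y = M - y := by
      rw [hs2]; field_simp
    rw [hsq, hs2]
    have hM' : M ≠ 0 := hM0.ne'
    have hy' : y ≠ 0 := hy0.ne'
    have hs' : s ≠ 0 := hs0.ne'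
    rw [show 1 + (M / y - 1) = M / y by ring]
    field_simp
    linear_combination M * hs2'
  have hint : IntervalIntegrable (fun y => Real.sqrt (y * (M - y)) / y ^ 2)
      MeasureTheory.volume (1/M) M := by
    apply ContinuousOn.intervalIntegrable
    rw [uIcc_of_le hle]
    exact ((continuousOn_id.mul (continuousOn_const.sub continuousOn_id)).sqrt).div
      (continuousOn_id.pow 2) (fun y hy => by
        have : (0:ℝ) < y := lt_of_lt_of_le hinv hy.1
        positivity)
  have := intervalIntegral.integral_eq_sub_of_hasDeriv_right_of_le hle hcont
    (fun y hy => (hderiv y hy).hasDerivWithinAt) hint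
  rw [this]
  have e1 : M / M - 1 = 0 := by field_simp; norm_num
  have e2 : M / (1/M) - 1 = M ^ 2 - 1 := by field_simp
  simp [G, e1, e2, Real.arctan_zero]
  ring

lemma intB {M : ℝ} (hM : 2 ≤ M) :
    ∫ y in (1 / M)..1, Real.sqrt (1 - y ^ 2) / y ^ 2
      = M * Real.sqrt (1 - (1/M) ^ 2) + Real.arcsin (1/M) - Real.pi / 2 := by
  have hM0 : (0:ℝ) < M := by linarith
  have hinv : (0:ℝ) < 1 / M := by positivity
  have hle : 1 / M ≤ 1 := by
    rw [div_le_one hM0]; linarith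
  set F : ℝ → ℝ := fun y => -(Real.sqrt (1 - y ^ 2) / y) - Real.arcsin y with hF
  have hcont : ContinuousOn F (Icc (1/M) 1) := by
    apply ContinuousOn.sub
    · exact (((continuousOn_const.sub (continuousOn_id.pow 2)).sqrt).div continuousOn_id
        (fun y hy => ne_of_gt (lt_of_lt_of_le hinv hy.1))).neg
    · exact Real.continuous_arcsin.continuousOn
  have hderiv : ∀ y ∈ Ioo (1/M) 1, HasDerivAt F (Real.sqrt (1 - y ^ 2) / y ^ 2) y := by
    intro y hy
    have hy0 : (0:ℝ) < y := lt_of_lt_of_le hinv hy.1.le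
    have hy1 : y < 1 := hy.2
    have hu : 0 < 1 - y ^ 2 := by nlinarith
    set t := Real.sqrt (1 - y ^ 2) with ht
    have ht0 : 0 < t := Real.sqrt_pos.mpr hu
    have ht2 : t ^ 2 = 1 - y ^ 2 := Real.sq_sqrt hu.le
    have h1 : HasDerivAt (fun y : ℝ => 1 - y ^ 2) (0 - 2 * y ^ 1) y := by
      exact ((hasDerivAt_pow 2 y).const_sub (1:ℝ)).congr_deriv (by norm_num)
    have h2 : HasDerivAt (fun y : ℝ => Real.sqrt (1 - y ^ 2))
        ((0 - 2 * y ^ 1) / (2 * t)) y := h1.sqrt (ne_of_gt hu)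
    have h3 := (h2.div (hasDerivAt_id y) (ne_of_gt hy0)).neg
    have h4 : HasDerivAt Real.arcsin (1 / Real.sqrt (1 - y ^ 2)) y :=
      Real.hasDerivAt_arcsin (by linarith) (ne_of_lt hy1)
    have h5 := h3.sub h4
    refine h5.congr_deriv ?_
    symm
    rw [← ht]
    simp only [id]
    field_simp
    ring
  have hint : IntervalIntegrable (fun y => Real.sqrt (1 - y ^ 2) / y ^ 2)
      MeasureTheory.volume (1/M) 1 := by
    apply ContinuousOn.intervalIntegrable
    rw [uIcc_of_le hle]
    exact ((continuousOn_const.sub (continuousOn_id.pow 2)).sqrt).div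
      (continuousOn_id.pow 2) (fun y hy => by
        have : (0:ℝ) < y := lt_of_lt_of_le hinv hy.1
        positivity)
  rw [intervalIntegral.integral_eq_sub_of_hasDeriv_right_of_le hle hcont
    (fun y hy => (hderiv y hy).hasDerivWithinAt) hint]
  have e1 : F 1 = - (Real.pi / 2) := by
    simp [F, Real.arcsin_one]
  have e2 : F (1/M) = -(M * Real.sqrt (1 - (1/M) ^ 2)) - Real.arcsin (1/M) := by
    have key : Real.sqrt (1 - (1/M) ^ 2) / (1/M) = M * Real.sqrt (1 - (1/M) ^ 2) := by
      rw [div_eq_iff (ne_of_gt hinv), mul_comm M, mul_assoc, mul_one_div,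
        div_self (ne_of_gt hM0), mul_one]
    simp only [F]
    rw [key]
  rw [e1, e2]
  ring

/-- **Lemma 6 (volume in the definite case).** For
`I(M) = ∫_{1/M}^{M} (√(y(M-y)) - √(max(1-y², 0)))/y² dy` one has `I(M)/M → 1` as
`M → ∞`, i.e. `I(M) = M + o(M)`. -/
theorem volume_definite_asymptotics :
    Filter.Tendsto
      (fun M : ℝ =>
        (∫ y in (1 / M)..M,
          (Real.sqrt (y * (M - y)) - Real.sqrt (max (1 - y ^ 2) 0)) / y ^ 2) / M)
      Filter.atTop (nhds 1) := by
  have h0 : Tendsto (fun M : ℝ => 1 / M) atTop (nhds 0) :=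
    tendsto_inv_atTop_zero.congr fun x => (one_div x).symm
  have key : (fun M : ℝ =>
        (∫ y in (1 / M)..M,
          (Real.sqrt (y * (M - y)) - Real.sqrt (max (1 - y ^ 2) 0)) / y ^ 2) / M)
      =ᶠ[atTop] (fun M : ℝ => Real.sqrt (1 - (1/M) ^ 2)
          - (2 * Real.arctan (Real.sqrt (M ^ 2 - 1)) + Real.arcsin (1/M) - Real.pi/2) / M) := by
    filter_upwards [eventually_ge_atTop (2:ℝ)] with M hM
    have hM0 : (0:ℝ) < M := by linarith
    have hinv : (0:ℝ) < 1 / M := by positivity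
    have hle1 : 1 / M ≤ 1 := by rw [div_le_one hM0]; linarith
    have h1M : (1:ℝ) ≤ M := by linarith
    have hle : 1 / M ≤ M := le_trans hle1 h1M
    have hcont1 : ContinuousOn (fun y => Real.sqrt (y * (M - y)) / y ^ 2) (uIcc (1/M) M) := by
      rw [uIcc_of_le hle]
      exact ((continuousOn_id.mul (continuousOn_const.sub continuousOn_id)).sqrt).div
        (continuousOn_id.pow 2) (fun y hy => by
          have : (0:ℝ) < y := lt_of_lt_of_le hinv hy.1
          positivity)
    have hcont2 : ContinuousOn (fun y => Real.sqrt (max (1 - y ^ 2) 0) / y ^ 2)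
        (uIcc (1/M) M) := by
      rw [uIcc_of_le hle]
      exact (Real.continuous_sqrt.comp
          ((continuous_const.sub (continuous_pow 2)).max continuous_const)).continuousOn.div
        (continuousOn_id.pow 2) (fun y hy => by
          have : (0:ℝ) < y := lt_of_lt_of_le hinv hy.1
          positivity)
    have hi1 := hcont1.intervalIntegrable (μ := MeasureTheory.volume)
    have hi2 := hcont2.intervalIntegrable (μ := MeasureTheory.volume)
    have hsplit : (∫ y in (1/M)..M,
          (Real.sqrt (y * (M - y)) - Real.sqrt (max (1 - y ^ 2) 0)) / y ^ 2)
        = (∫ y in (1/M)..M, Real.sqrt (y * (M - y)) / y ^ 2)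
          - ∫ y in (1/M)..M, Real.sqrt (max (1 - y ^ 2) 0) / y ^ 2 := by
      rw [← intervalIntegral.integral_sub hi1 hi2]
      exact intervalIntegral.integral_congr (fun y hy => sub_div _ _ _)
    have hsub1 : uIcc (1/M) 1 ⊆ uIcc (1/M) M := by
      rw [uIcc_of_le hle1, uIcc_of_le hle]
      exact Icc_subset_Icc le_rfl h1M
    have hsub2 : uIcc (1:ℝ) M ⊆ uIcc (1/M) M := by
      rw [uIcc_of_le h1M, uIcc_of_le hle]
      exact Icc_subset_Icc hle1 le_rfl
    have h2a : (∫ y in (1/M)..M, Real.sqrt (max (1 - y ^ 2) 0) / y ^ 2)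
        = (∫ y in (1/M)..1, Real.sqrt (max (1 - y ^ 2) 0) / y ^ 2)
          + ∫ y in (1:ℝ)..M, Real.sqrt (max (1 - y ^ 2) 0) / y ^ 2 :=
      (intervalIntegral.integral_add_adjacent_intervals
        (hi2.mono_set hsub1) (hi2.mono_set hsub2)).symm
    have h2b : (∫ y in (1:ℝ)..M, Real.sqrt (max (1 - y ^ 2) 0) / y ^ 2) = 0 := by
      have heq : EqOn (fun y => Real.sqrt (max (1 - y ^ 2) 0) / y ^ 2) (fun _ => (0:ℝ))
          (uIcc (1:ℝ) M) := by
        rw [uIcc_of_le h1M]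
        intro y hy
        have h1 : 1 - y ^ 2 ≤ 0 := by nlinarith [hy.1]
        simp [max_eq_right h1]
      rw [intervalIntegral.integral_congr heq, intervalIntegral.integral_zero]
    have h2c : (∫ y in (1/M)..1, Real.sqrt (max (1 - y ^ 2) 0) / y ^ 2)
        = ∫ y in (1/M)..1, Real.sqrt (1 - y ^ 2) / y ^ 2 := by
      apply intervalIntegral.integral_congr
      rw [uIcc_of_le hle1]
      intro y hy
      have hy0 : (0:ℝ) ≤ y := le_trans hinv.le hy.1
      have h1 : (0:ℝ) ≤ 1 - y ^ 2 := by nlinarith [hy.2]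
      simp [max_eq_left h1]
    rw [hsplit, h2a, h2b, h2c, intA hM, intB hM]
    have hkey : Real.sqrt (M ^ 2 - 1) = M * Real.sqrt (1 - (1/M) ^ 2) := by
      have h9 : (1 : ℝ) - (1/M) ^ 2 = (M ^ 2 - 1) / M ^ 2 := by field_simp
      rw [h9, Real.sqrt_div (by nlinarith : (0:ℝ) ≤ M ^ 2 - 1), Real.sqrt_sq hM0.le,
        mul_div_cancel₀ _ (ne_of_gt hM0)]
    rw [hkey]
    field_simp
    ring
  have l1 : Tendsto (fun M : ℝ => Real.sqrt (1 - (1/M) ^ 2)) atTop (nhds 1) := by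
    have h2 : Tendsto (fun M : ℝ => 1 - (1/M) ^ 2) atTop (nhds 1) := by
      have := (tendsto_const_nhds (x := (1:ℝ)) (f := atTop)).sub (h0.pow 2)
      simpa using this
    have := (Real.continuous_sqrt.tendsto 1).comp h2
    simpa [Function.comp_def] using this
  have l2 : Tendsto (fun M : ℝ =>
      2 * Real.arctan (Real.sqrt (M ^ 2 - 1)) + Real.arcsin (1/M) - Real.pi/2)
      atTop (nhds (Real.pi/2)) := by
    have ha : Tendsto (fun M : ℝ => Real.sqrt (M ^ 2 - 1)) atTop atTop := by
      apply tendsto_atTop_mono' atTop ?_ (tendsto_atTop_add_const_right atTop (-1) tendsto_id)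
      filter_upwards [eventually_ge_atTop (1:ℝ)] with M hM
      have h1 : (M - 1) ^ 2 ≤ M ^ 2 - 1 := by nlinarith
      have h2 : M - 1 = Real.sqrt ((M - 1) ^ 2) := (Real.sqrt_sq (by linarith)).symm
      calc (fun x : ℝ => x + -1) M = M - 1 := by ring
        _ = Real.sqrt ((M - 1) ^ 2) := h2
        _ ≤ Real.sqrt (M ^ 2 - 1) := Real.sqrt_le_sqrt h1
    have harctan : Tendsto (fun M : ℝ => Real.arctan (Real.sqrt (M ^ 2 - 1)))
        atTop (nhds (Real.pi/2)) :=
      (Real.tendsto_arctan_atTop.mono_right nhdsWithin_le_nhds).comp ha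
    have harcsin : Tendsto (fun M : ℝ => Real.arcsin (1/M)) atTop (nhds 0) := by
      have := (Real.continuous_arcsin.tendsto 0).comp h0
      simpa [Function.comp_def] using this
    have := ((harctan.const_mul 2).add harcsin).sub (tendsto_const_nhds (x := Real.pi/2))
    convert this using 2
    ring
  have l3 := l2.div_atTop tendsto_id
  have lfinal := l1.sub l3
  rw [sub_zero] at lfinal
  exact Tendsto.congr' key.symm lfinal
end

section
/- For M > 0 let A(M) denote the two-dimensional Lebesgue measure of the region {(θ, u) ∈ ℝ² : 0 ≤ θ < π/2, u ≥ 0, u + cos θ · √(1 + u²) ≤ M}. Then A(M)/M → 1 as M → ∞; that is, A(M) = M + o(M). -/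
open Filter Real MeasureTheory Set

lemma contOn : ContinuousOn (fun θ : ℝ => (1 + Real.cos θ)⁻¹) (Set.Icc 0 (Real.pi/2)) := by
  apply ContinuousOn.inv₀ (by fun_prop)
  intro x hx
  have : 0 ≤ Real.cos x := Real.cos_nonneg_of_mem_Icc ⟨by linarith [hx.1, Real.pi_pos], hx.2⟩
  positivity

lemma integral_one_add_cos_inv : ∫ θ in (0:ℝ)..(Real.pi/2), (1 + Real.cos θ)⁻¹ = 1 := by
  have h : ∀ θ ∈ Set.uIcc (0:ℝ) (Real.pi/2),
      HasDerivAt (fun x : ℝ => Real.tan (x/2)) ((1 + Real.cos θ)⁻¹) θ := by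
    intro θ hθ
    rw [Set.uIcc_of_le (by positivity)] at hθ
    have hc : Real.cos (θ/2) ≠ 0 := by
      have := Real.cos_pos_of_mem_Ioo (show θ/2 ∈ Set.Ioo (-(Real.pi/2)) (Real.pi/2) from
        ⟨by nlinarith [hθ.1, Real.pi_pos], by nlinarith [hθ.2, Real.pi_pos]⟩)
      linarith
    have h0 : (1:ℝ) + Real.cos θ ≠ 0 := by
      have : 0 ≤ Real.cos θ := Real.cos_nonneg_of_mem_Icc
        ⟨by linarith [hθ.1, Real.pi_pos], hθ.2⟩
      positivity
    have := (Real.hasDerivAt_tan hc).comp θ ((hasDerivAt_id θ).div_const 2)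
    refine this.congr_deriv ?_
    have hsq : Real.cos (θ/2) ^ 2 = 1/2 + Real.cos θ / 2 := by
      have := Real.cos_sq (θ/2)
      rwa [show 2 * (θ/2) = θ by ring] at this
    rw [hsq]
    field_simp
  have hint : IntervalIntegrable (fun θ : ℝ => (1 + Real.cos θ)⁻¹) volume 0 (Real.pi/2) :=
    (contOn.mono (by rw [Set.uIcc_of_le (by positivity)])).intervalIntegrable
  have := intervalIntegral.integral_eq_sub_of_hasDerivAt h hint
  rw [this]
  norm_num [show Real.pi/2/2 = Real.pi/4 by ring, Real.tan_pi_div_four]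

lemma setIntegral_one_add_cos_inv :
    ∫ θ in Set.Ico (0:ℝ) (Real.pi/2), (1 + Real.cos θ)⁻¹ = 1 := by
  rw [MeasureTheory.integral_Ico_eq_integral_Ioo, ← MeasureTheory.integral_Ioc_eq_integral_Ioo,
    ← intervalIntegral.integral_of_le (by positivity)]
  exact integral_one_add_cos_inv

lemma integrableBase : IntegrableOn (fun θ : ℝ => (1 + Real.cos θ)⁻¹)
    (Set.Ico 0 (Real.pi/2)) := by
  exact (contOn.integrableOn_Icc).mono_set Set.Ico_subset_Icc_self

lemma vol_region (a c d : ℝ) (hc : 0 ≤ c) (had : a ≤ d) :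
    MeasureTheory.volume (regionBetween (fun _ => a)
      (fun θ => c * (1 + Real.cos θ)⁻¹ + d) (Set.Ico 0 (Real.pi/2)))
    = ENNReal.ofReal (c + (d - a) * (Real.pi/2)) := by
  have hIco : MeasurableSet (Set.Ico (0:ℝ) (Real.pi/2)) := measurableSet_Ico
  have hvol : MeasureTheory.volume (Set.Ico (0:ℝ) (Real.pi/2)) ≠ ⊤ := by
    simp [Real.volume_Ico]
  have g_int : IntegrableOn (fun θ : ℝ => c * (1 + Real.cos θ)⁻¹ + d)
      (Set.Ico 0 (Real.pi/2)) :=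
    (integrableBase.const_mul c).add (integrableOn_const hvol)
  have f_int : IntegrableOn (fun _ : ℝ => a) (Set.Ico 0 (Real.pi/2)) :=
    integrableOn_const hvol
  have key := volume_regionBetween_eq_integral f_int g_int hIco
    (fun x _ => by
      have h1 : (0:ℝ) ≤ (1 + Real.cos x)⁻¹ :=
        inv_nonneg.2 (by linarith [Real.neg_one_le_cos x])
      nlinarith)
  rw [show ((MeasureTheory.volume : Measure ℝ).prod MeasureTheory.volume)
      = (MeasureTheory.volume : Measure (ℝ × ℝ)) from rfl] at key
  rw [key]
  congr 1
  rw [show ((fun θ : ℝ => c * (1 + Real.cos θ)⁻¹ + d) - (fun _ : ℝ => a))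
      = (fun y : ℝ => c * (1 + Real.cos y)⁻¹ + (d - a)) from
    funext fun y => by simp only [Pi.sub_apply]; ring]
  rw [MeasureTheory.integral_add (integrableBase.const_mul c)
    (integrableOn_const hvol),
    MeasureTheory.integral_const_mul, setIntegral_one_add_cos_inv,
    MeasureTheory.setIntegral_const, measureReal_def, Real.volume_Ico]
  rw [ENNReal.toReal_ofReal (by linarith [Real.pi_pos] : (0:ℝ) ≤ Real.pi/2 - 0)]
  simp only [smul_eq_mul]
  ring

/-- **Lemma 7 (volume in the indefinite nonsplit case).** Let `A(M)` be the Lebesgue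
measure of `{(θ, u) : 0 ≤ θ < π/2, u ≥ 0, u + cos θ √(1 + u²) ≤ M}`. Then `A(M)/M → 1`
as `M → ∞`, i.e. `A(M) = M + o(M)`. -/
theorem volume_indefinite_asymptotics :
    Filter.Tendsto
      (fun M : ℝ =>
        (MeasureTheory.volume
          {p : ℝ × ℝ | 0 ≤ p.1 ∧ p.1 < Real.pi / 2 ∧ 0 ≤ p.2 ∧
            p.2 + Real.cos p.1 * Real.sqrt (1 + p.2 ^ 2) ≤ M}).toReal / M)
      Filter.atTop (nhds 1) := by
  set S : ℝ → Set (ℝ × ℝ) := fun M =>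
    {p : ℝ × ℝ | 0 ≤ p.1 ∧ p.1 < Real.pi / 2 ∧ 0 ≤ p.2 ∧
      p.2 + Real.cos p.1 * Real.sqrt (1 + p.2 ^ 2) ≤ M} with hS
  -- bounds for M ≥ 1
  have key : ∀ M : ℝ, 1 ≤ M →
      M - 1 ≤ (MeasureTheory.volume (S M)).toReal ∧
      (MeasureTheory.volume (S M)).toReal ≤ M + Real.pi := by
    intro M hM
    have hsub1 : regionBetween (fun _ => (0:ℝ))
        (fun θ => (M - 1) * (1 + Real.cos θ)⁻¹ + 0) (Set.Ico 0 (Real.pi/2)) ⊆ S M := by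
      rintro ⟨θ, u⟩ ⟨hθ, hu⟩
      have hcos : 0 ≤ Real.cos θ := Real.cos_nonneg_of_mem_Icc
        ⟨by linarith [hθ.1, Real.pi_pos], hθ.2.le⟩
      have h1c : (0:ℝ) < 1 + Real.cos θ := by positivity
      have hu0 : (0:ℝ) ≤ u := hu.1.le
      have hsqrt : Real.sqrt (1 + u ^ 2) ≤ 1 + u := by
        rw [show (1:ℝ) + u = Real.sqrt ((1 + u) ^ 2) from
          (Real.sqrt_sq (by linarith)).symm]
        exact Real.sqrt_le_sqrt (by nlinarith)
      have hub : u * (1 + Real.cos θ) < M - 1 := by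
        have := hu.2
        simp only at this
        rw [add_zero, ← div_eq_mul_inv, lt_div_iff₀ h1c] at this
        exact this
      refine ⟨hθ.1, hθ.2, hu0, ?_⟩
      have hc1 : Real.cos θ ≤ 1 := Real.cos_le_one θ
      nlinarith [mul_le_mul_of_nonneg_left hsqrt hcos]
    have hsub2 : S M ⊆ regionBetween (fun _ => (-1:ℝ))
        (fun θ => M * (1 + Real.cos θ)⁻¹ + 1) (Set.Ico 0 (Real.pi/2)) := by
      rintro ⟨θ, u⟩ ⟨h0, hlt, hu0, hle⟩
      have hcos : 0 ≤ Real.cos θ := Real.cos_nonneg_of_mem_Icc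
        ⟨by linarith [h0, Real.pi_pos], hlt.le⟩
      have h1c : (0:ℝ) < 1 + Real.cos θ := by positivity
      have hsqrt : u ≤ Real.sqrt (1 + u ^ 2) := by
        have h := Real.sqrt_le_sqrt (show u ^ 2 ≤ 1 + u ^ 2 by linarith)
        rwa [Real.sqrt_sq hu0] at h
      refine ⟨⟨h0, hlt⟩, by simp only; linarith, ?_⟩
      have hub : u * (1 + Real.cos θ) ≤ M := by
        nlinarith [mul_le_mul_of_nonneg_left hsqrt hcos]
      have : u ≤ M * (1 + Real.cos θ)⁻¹ := by
        rw [← div_eq_mul_inv, le_div_iff₀ h1c]; exact hub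
      simp only
      linarith
    have hv1 := vol_region 0 (M - 1) 0 (by linarith) le_rfl
    have hv2 := vol_region (-1) M 1 (by linarith) (by norm_num)
    have hle1 : ENNReal.ofReal (M - 1) ≤ MeasureTheory.volume (S M) := by
      rw [show ENNReal.ofReal (M - 1) = ENNReal.ofReal ((M-1) + (0 - 0) * (Real.pi/2))
        by norm_num, ← hv1]
      exact measure_mono hsub1
    have hle2 : MeasureTheory.volume (S M) ≤ ENNReal.ofReal (M + Real.pi) := by
      rw [show ENNReal.ofReal (M + Real.pi) = ENNReal.ofReal (M + (1 - (-1)) * (Real.pi/2))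
        by norm_num; ring_nf, ← hv2]
      exact measure_mono hsub2
    have hne : MeasureTheory.volume (S M) ≠ ⊤ :=
      ne_top_of_le_ne_top ENNReal.ofReal_ne_top hle2
    constructor
    · have := ENNReal.toReal_mono hne hle1
      rwa [ENNReal.toReal_ofReal (by linarith)] at this
    · have := ENNReal.toReal_mono ENNReal.ofReal_ne_top hle2
      rwa [ENNReal.toReal_ofReal (by linarith [Real.pi_pos])] at this
  -- squeeze
  have hlow : Filter.Tendsto (fun M : ℝ => (M - 1) / M) Filter.atTop (nhds 1) := by
    have h : Filter.Tendsto (fun M : ℝ => 1 - M⁻¹) Filter.atTop (nhds (1 - 0)) :=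
      tendsto_const_nhds.sub tendsto_inv_atTop_zero
    rw [sub_zero] at h
    refine h.congr' ?_
    filter_upwards [Filter.eventually_gt_atTop 0] with M hM
    field_simp
  have hhigh : Filter.Tendsto (fun M : ℝ => (M + Real.pi) / M) Filter.atTop (nhds 1) := by
    have h : Filter.Tendsto (fun M : ℝ => 1 + Real.pi * M⁻¹) Filter.atTop
        (nhds (1 + Real.pi * 0)) :=
      tendsto_const_nhds.add (tendsto_const_nhds.mul tendsto_inv_atTop_zero)
    rw [mul_zero, add_zero] at h
    refine h.congr' ?_
    filter_upwards [Filter.eventually_gt_atTop 0] with M hM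
    field_simp
  refine tendsto_of_tendsto_of_tendsto_of_le_of_le' hlow hhigh ?_ ?_
  · filter_upwards [Filter.eventually_ge_atTop 1] with M hM
    have hM0 : (0:ℝ) < M := by linarith
    exact div_le_div_of_nonneg_right ((key M hM).1) hM0.le
  · filter_upwards [Filter.eventually_ge_atTop 1] with M hM
    have hM0 : (0:ℝ) < M := by linarith
    exact div_le_div_of_nonneg_right ((key M hM).2) hM0.le
end

section
/- Let Q = [a,b,c] be a primitive positive definite integral binary quadratic form of discriminant d = b² − 4ac < 0. Then the number of matrices g ∈ SL₂(ℤ) whose induced substitution fixes Q (that is, Q(px+qy, rx+sy) = Q(x,y) for g = (p q; r s)) equals ω(d), where ω(d) = 4 if d = −4, 6 if d = −3, and 2 otherwise. -/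
open Filter Real Asymptotics

lemma aux_struct (a b c : ℤ) (ha : 0 < a) (hd : b ^ 2 - 4 * a * c < 0)
    (hprim : Int.gcd a (Int.gcd b c) = 1)
    (g : Matrix.SpecialLinearGroup (Fin 2) ℤ) (hg : actForm g (a,b,c) = (a,b,c)) :
    ∃ u : ℤ,
      (g : Matrix (Fin 2) (Fin 2) ℤ) 1 0 = a * u ∧
      (g : Matrix (Fin 2) (Fin 2) ℤ) 0 1 = -(c * u) ∧
      (g : Matrix (Fin 2) (Fin 2) ℤ) 1 1 = (g : Matrix (Fin 2) (Fin 2) ℤ) 0 0 + b * u ∧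
      ((g : Matrix (Fin 2) (Fin 2) ℤ) 1 0) / a = u ∧
      ((g : Matrix (Fin 2) (Fin 2) ℤ) 0 0) ^ 2 + b * ((g : Matrix (Fin 2) (Fin 2) ℤ) 0 0) * u
        + a * c * u ^ 2 = 1 := by
  have hc : 0 < c := by nlinarith [sq_nonneg b]
  set p := (g : Matrix (Fin 2) (Fin 2) ℤ) 0 0 with hp0
  set q := (g : Matrix (Fin 2) (Fin 2) ℤ) 0 1 with hq0
  set r := (g : Matrix (Fin 2) (Fin 2) ℤ) 1 0 with hr0
  set s := (g : Matrix (Fin 2) (Fin 2) ℤ) 1 1 with hs0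
  have hdet : p * s - q * r = 1 := by
    have := g.2
    rw [Matrix.det_fin_two] at this
    exact this
  simp only [actForm, Prod.mk.injEq] at hg
  obtain ⟨e1, e2, e3⟩ := hg
  simp only [← hp0, ← hq0, ← hr0, ← hs0] at e1 e2 e3
  have h2'' : 2 * (a * p * q + b * (q * r) + c * (r * s)) = 0 := by linear_combination e2 - b * hdet
  have h2' : a * p * q + b * (q * r) + c * (r * s) = 0 := by linarith
  have hA : a * q + c * r = 0 := by linear_combination p * h2' - q * e1 - c * r * hdet
  have hE : a * (p - s) + b * r = 0 := by
    have hpE : p * (a * (p - s) + b * r) = 0 := by linear_combination e1 - a * hdet - r * hA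
    have hsE : c * (s * (a * (p - s) + b * r)) = 0 := by
      linear_combination a * c * hdet - a * e3 + (b * s + a * q) * hA
    by_cases hp : p = 0
    · by_cases hs : s = 0
      · have hqr : q * r = -1 := by rw [hp, hs] at hdet; linarith
        have hb : b = 0 := by
          rw [hp, hs] at e2
          have h2b : 2 * b = 0 := by linear_combination b * hqr - e2
          omega
        rw [hp, hs, hb]; ring
      · rcases mul_eq_zero.1 hsE with h | h
        · omega
        · rcases mul_eq_zero.1 h with h' | h'
          · exact absurd h' hs
          · exact h'
    · rcases mul_eq_zero.1 hpE with h | h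
      · exact absurd h hp
      · exact h
  have h1' : (1 : ℤ) = a * Int.gcdA a (Int.gcd b c) + (Int.gcd b c) * Int.gcdB a (Int.gcd b c) := by
    have := Int.gcd_eq_gcd_ab a (Int.gcd b c)
    rw [hprim] at this
    exact_mod_cast this
  have h2g : ((Int.gcd b c : ℤ)) = b * Int.gcdA b c + c * Int.gcdB b c := Int.gcd_eq_gcd_ab b c
  set α := Int.gcdA a (Int.gcd b c)
  set β := Int.gcdB a (Int.gcd b c)
  set γ := Int.gcdA b c
  set δ := Int.gcdB b c
  have hdvd : a ∣ r := ⟨r * α + β * γ * (s - p) - β * δ * q, by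
    linear_combination r * h1' + r * β * h2g + β * γ * hE + β * δ * hA⟩
  set u := r / a with hu0
  have hr : r = a * u := (Int.mul_ediv_cancel' hdvd).symm
  have hq : q = -(c * u) := by
    have : a * q = a * (-(c * u)) := by linear_combination hA - c * hr
    exact mul_left_cancel₀ ha.ne' this
  have hs : s = p + b * u := by
    have : a * s = a * (p + b * u) := by linear_combination -hE + b * hr
    exact mul_left_cancel₀ ha.ne' this
  refine ⟨u, hr, hq, hs, rfl, ?_⟩
  have hdet' : p * (p + b * u) - (-(c * u)) * (a * u) = 1 := by rw [← hq, ← hs, ← hr]; exact hdet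
  linear_combination hdet'


set_option maxHeartbeats 1000000 in
/-- **Automorphs of a definite form.** For a primitive positive definite integral binary
quadratic form `Q = [a,b,c]` of discriminant `d = b² - 4ac < 0`, the number of
`g ∈ SL₂(ℤ)` fixing `Q` under the substitution action equals `ω(d)` (`4` if `d = -4`,
`6` if `d = -3`, `2` otherwise). -/
theorem card_stabilizer_definite (a b c : ℤ) (ha : 0 < a) (hd : b ^ 2 - 4 * a * c < 0)
    (hprim : Int.gcd a (Int.gcd b c) = 1) :
    Set.ncard {g : Matrix.SpecialLinearGroup (Fin 2) ℤ | actForm g (a, b, c) = (a, b, c)} =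
      omegaDisc (b ^ 2 - 4 * a * c) := by
  classical
  have hc : 0 < c := by nlinarith [sq_nonneg b]
  set S : Set (Matrix.SpecialLinearGroup (Fin 2) ℤ) :=
    {g | actForm g (a, b, c) = (a, b, c)} with hS
  set P : Set (ℤ × ℤ) := {tu | tu.1 ^ 2 - (b ^ 2 - 4 * a * c) * tu.2 ^ 2 = 4} with hPdef
  set ψ : Matrix.SpecialLinearGroup (Fin 2) ℤ → ℤ × ℤ :=
    fun g => ((g : Matrix (Fin 2) (Fin 2) ℤ) 0 0 + (g : Matrix (Fin 2) (Fin 2) ℤ) 1 1,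
      ((g : Matrix (Fin 2) (Fin 2) ℤ) 1 0) / a) with hψ
  -- ψ maps S into P
  have hmaps : ∀ g ∈ S, ψ g ∈ P := by
    intro g hg
    obtain ⟨u, hr, hq, hs, hu, hQ⟩ := aux_struct a b c ha hd hprim g hg
    simp only [hψ, hPdef, Set.mem_setOf_eq, hu, hs]
    linear_combination 4 * hQ
  -- ψ is injective on S
  have hinj : Set.InjOn ψ S := by
    intro g hg g' hg' he
    obtain ⟨u, hr, hq, hs, hu, hQ⟩ := aux_struct a b c ha hd hprim g hg
    obtain ⟨u', hr', hq', hs', hu', hQ'⟩ := aux_struct a b c ha hd hprim g' hg'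
    have h1 : (g : Matrix (Fin 2) (Fin 2) ℤ) 0 0 + (g : Matrix (Fin 2) (Fin 2) ℤ) 1 1
        = (g' : Matrix (Fin 2) (Fin 2) ℤ) 0 0 + (g' : Matrix (Fin 2) (Fin 2) ℤ) 1 1 :=
      congrArg Prod.fst he
    have h2 : u = u' := by
      have := congrArg Prod.snd he
      simp only [hψ] at this
      rw [hu, hu'] at this
      exact this
    subst h2
    have hpp : (g : Matrix (Fin 2) (Fin 2) ℤ) 0 0 = (g' : Matrix (Fin 2) (Fin 2) ℤ) 0 0 := by
      rw [hs, hs'] at h1; linarith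
    apply Subtype.ext
    ext i j
    fin_cases i <;> fin_cases j
    · exact hpp
    · exact hq.trans hq'.symm
    · exact hr.trans hr'.symm
    · show (g : Matrix (Fin 2) (Fin 2) ℤ) 1 1 = (g' : Matrix (Fin 2) (Fin 2) ℤ) 1 1
      rw [hs, hs', hpp]
  -- ψ is surjective from S onto P
  have hsurj : ∀ tu ∈ P, ∃ g ∈ S, ψ g = tu := by
    rintro ⟨t, u⟩ htu
    simp only [hPdef, Set.mem_setOf_eq] at htu
    have h4 : (t - b * u) * (t + b * u) = 4 * (1 - a * c * u ^ 2) := by linear_combination htu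
    have hev : Even ((t - b * u) * (t + b * u)) := by
      rw [h4]; exact ⟨2 * (1 - a * c * u ^ 2), by ring⟩
    obtain ⟨k, hk⟩ : ∃ k, t - b * u = 2 * k := by
      rcases Int.even_mul.mp hev with ⟨m, hm⟩ | ⟨m, hm⟩
      · exact ⟨m, by omega⟩
      · exact ⟨m - b * u, by omega⟩
    have hQ : k ^ 2 + b * k * u + a * c * u ^ 2 = 1 := by
      have h4' : 4 * (k ^ 2 + b * k * u + a * c * u ^ 2) = 4 := by
        linear_combination htu - (t + b * u + 2 * k) * hk
      linarith
    refine ⟨⟨!![k, -(c * u); a * u, k + b * u], by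
      rw [Matrix.det_fin_two_of]; linear_combination hQ⟩, ?_, ?_⟩
    · show actForm _ (a, b, c) = (a, b, c)
      simp only [actForm]
      have E00 : ((⟨!![k, -(c * u); a * u, k + b * u], by
          rw [Matrix.det_fin_two_of]; linear_combination hQ⟩ :
          Matrix.SpecialLinearGroup (Fin 2) ℤ) : Matrix (Fin 2) (Fin 2) ℤ) 0 0 = k := rfl
      simp only [Prod.mk.injEq]
      refine ⟨?_, ?_, ?_⟩
      · show a * k ^ 2 + b * k * (a * u) + c * (a * u) ^ 2 = a
        linear_combination a * hQ
      · show 2 * a * k * (-(c * u)) + b * (k * (k + b * u) + -(c * u) * (a * u))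
            + 2 * c * (a * u) * (k + b * u) = b
        linear_combination b * hQ
      · show a * (-(c * u)) ^ 2 + b * (-(c * u)) * (k + b * u) + c * (k + b * u) ^ 2 = c
        linear_combination c * hQ
    · show (k + (k + b * u), (a * u) / a) = (t, u)
      rw [Int.mul_ediv_cancel_left u ha.ne']
      refine Prod.ext ?_ rfl
      show k + (k + b * u) = t
      omega
  -- transfer cardinality
  have himg : ψ '' S = P := by
    apply Set.Subset.antisymm
    · rintro _ ⟨g, hg, rfl⟩; exact hmaps g hg
    · intro tu htu
      obtain ⟨g, hg, he⟩ := hsurj tu htu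
      exact ⟨g, hg, he⟩
  have hcard : S.ncard = P.ncard := by
    rw [← himg, Set.ncard_image_of_injOn hinj]
  rw [hcard]
  -- now count P
  by_cases h4 : b ^ 2 - 4 * a * c = -4
  · have : P = (↑({(2, 0), (-2, 0), (0, 1), (0, -1)} : Finset (ℤ × ℤ)) : Set (ℤ × ℤ)) := by
      ext ⟨t, u⟩
      simp only [hPdef, Set.mem_setOf_eq, h4, Finset.coe_insert, Finset.coe_singleton,
        Set.mem_insert_iff, Set.mem_singleton_iff, Prod.mk.injEq]
      constructor
      · intro h
        have hub : -1 ≤ u ∧ u ≤ 1 := by constructor <;> nlinarith [sq_nonneg t]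
        have htb : -2 ≤ t ∧ t ≤ 2 := by constructor <;> nlinarith [sq_nonneg u]
        obtain ⟨hu1, hu2⟩ := hub
        obtain ⟨ht1, ht2⟩ := htb
        interval_cases t <;> interval_cases u <;> revert h <;> decide
      · rintro (⟨rfl, rfl⟩ | ⟨rfl, rfl⟩ | ⟨rfl, rfl⟩ | ⟨rfl, rfl⟩) <;> norm_num
    rw [this, Set.ncard_coe_finset, h4]
    decide
  · by_cases h3 : b ^ 2 - 4 * a * c = -3
    · have : P = (↑({(2, 0), (-2, 0), (1, 1), (1, -1), (-1, 1), (-1, -1)} :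
          Finset (ℤ × ℤ)) : Set (ℤ × ℤ)) := by
        ext ⟨t, u⟩
        simp only [hPdef, Set.mem_setOf_eq, h3, Finset.coe_insert, Finset.coe_singleton,
          Set.mem_insert_iff, Set.mem_singleton_iff, Prod.mk.injEq]
        constructor
        · intro h
          have hub : -1 ≤ u ∧ u ≤ 1 := by constructor <;> nlinarith [sq_nonneg t]
          have htb : -2 ≤ t ∧ t ≤ 2 := by constructor <;> nlinarith [sq_nonneg u]
          obtain ⟨hu1, hu2⟩ := hub
          obtain ⟨ht1, ht2⟩ := htb
          interval_cases t <;> interval_cases u <;> revert h <;> decide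
        · rintro (⟨rfl, rfl⟩ | ⟨rfl, rfl⟩ | ⟨rfl, rfl⟩ | ⟨rfl, rfl⟩ | ⟨rfl, rfl⟩ | ⟨rfl, rfl⟩) <;>
            norm_num
      rw [this, Set.ncard_coe_finset, h3]
      decide
    · have hd5 : b ^ 2 - 4 * a * c ≤ -5 := by
        rcases Int.even_or_odd b with ⟨m, hm⟩ | ⟨m, hm⟩
        · have : b ^ 2 - 4 * a * c = 4 * (m * m - a * c) := by rw [hm]; ring
          omega
        · have : b ^ 2 - 4 * a * c = 4 * (m * m + m - a * c) + 1 := by rw [hm]; ring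
          omega
      have : P = (↑({(2, 0), (-2, 0)} : Finset (ℤ × ℤ)) : Set (ℤ × ℤ)) := by
        ext ⟨t, u⟩
        simp only [hPdef, Set.mem_setOf_eq, Finset.coe_insert, Finset.coe_singleton,
          Set.mem_insert_iff, Set.mem_singleton_iff, Prod.mk.injEq]
        constructor
        · intro h
          have hu : u = 0 := by
            by_contra h'
            have h1 : 1 ≤ u ^ 2 := by
              rcases lt_or_gt_of_ne h' with h'' | h'' <;> nlinarith
            nlinarith [sq_nonneg t,
              mul_nonpos_of_nonpos_of_nonneg
                (by linarith : b ^ 2 - 4 * a * c + 5 ≤ 0) (by linarith : (0:ℤ) ≤ u ^ 2 - 1)]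
          subst hu
          have ht : (t - 2) * (t + 2) = 0 := by linear_combination h
          rcases mul_eq_zero.1 ht with h' | h'
          · left; exact ⟨by linarith, rfl⟩
          · right; exact ⟨by linarith, rfl⟩
        · rintro (⟨rfl, rfl⟩ | ⟨rfl, rfl⟩) <;> norm_num
      rw [this, Set.ncard_coe_finset]
      simp [omegaDisc, h4, h3]
end

section
/- Let Q = [a,b,c] be a primitive indefinite integral binary quadratic form whose discriminant d = b² − 4ac > 0 is not a perfect square, and let (t,s) be the minimal solution in positive integers of t² − d·s² = 4. Set T₀ = ((t−bs)/2, −cs; as, (t+bs)/2) ∈ SL₂(ℤ). Then T₀ has infinite order, and the stabilizer of Q in SL₂(ℤ) (under the substitution action) is exactly the set {± T₀^m : m ∈ ℤ}; in particular it is isomorphic to ℤ/2ℤ × ℤ, generated by −I and T₀. -/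
set_option maxHeartbeats 1000000
set_option linter.unusedTactic false
set_option linter.unreachableTactic false
set_option linter.unnecessarySeqFocus false

open Filter Real Asymptotics

namespace Lemma8Aux

abbrev SL2 := Matrix.SpecialLinearGroup (Fin 2) ℤ

/-- The standard shape of an automorph of the form `[a,b,c]`. -/
def Mm (a b c p w : ℤ) : Matrix (Fin 2) (Fin 2) ℤ := !![p, -(c*w); a*w, p + b*w]

theorem Mm_det (a b c p w : ℤ) : (Mm a b c p w).det = p^2 + b*p*w + a*c*w^2 := by
  simp [Mm, Matrix.det_fin_two_of]; ring

theorem Mm_mul (a b c p₁ w₁ p₂ w₂ : ℤ) :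
    Mm a b c p₁ w₁ * Mm a b c p₂ w₂
      = Mm a b c (p₁*p₂ - a*c*(w₁*w₂)) (p₁*w₂ + p₂*w₁ + b*(w₁*w₂)) := by
  rw [Mm, Mm, Mm, Matrix.mul_fin_two]; ext i j
  fin_cases i <;> fin_cases j <;> simp <;> ring

theorem Mm_one (a b c : ℤ) : Mm a b c 1 0 = 1 := by
  ext i j; fin_cases i <;> fin_cases j <;> simp [Mm, Matrix.one_apply]

theorem Mm_adj (a b c p w : ℤ) : (Mm a b c p w).adjugate = Mm a b c (p + b*w) (-w) := by
  rw [Mm, Matrix.adjugate_fin_two_of]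
  ext i j; fin_cases i <;> fin_cases j <;> simp [Mm] <;> ring

theorem Mm_neg (a b c p w : ℤ) : -(Mm a b c p w) = Mm a b c (-p) (-w) := by
  ext i j; fin_cases i <;> fin_cases j <;> simp [Mm] <;> ring

theorem sl2_neg_inv (x : SL2) : (-x)⁻¹ = -(x⁻¹) := by
  apply inv_eq_of_mul_eq_one_right
  rw [neg_mul_neg, mul_inv_cancel]

theorem act_Mm (a b c p w : ℤ) (hP : p^2 + b*p*w + a*c*w^2 = 1) (g : SL2)
    (hg : (g : Matrix (Fin 2) (Fin 2) ℤ) = Mm a b c p w) :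
    actForm g (a, b, c) = (a, b, c) := by
  simp only [actForm, hg, Mm, Matrix.cons_val', Matrix.cons_val_zero, Matrix.cons_val_one,
    Matrix.head_cons, Matrix.head_fin_const, Matrix.empty_val', Matrix.cons_val_fin_one,
    Matrix.of_apply, Prod.mk.injEq]
  exact ⟨by linear_combination a*hP, by linear_combination b*hP, by linear_combination c*hP⟩

/-- The subgroup of `SL₂(ℤ)` of matrices of automorph shape. -/
def Hgrp (a b c : ℤ) : Subgroup SL2 where
  carrier := {g | ∃ p w : ℤ, p^2 + b*p*w + a*c*w^2 = 1 ∧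
    (g : Matrix (Fin 2) (Fin 2) ℤ) = Mm a b c p w}
  one_mem' := ⟨1, 0, by ring, by rw [Matrix.SpecialLinearGroup.coe_one, ← Mm_one a b c]⟩
  mul_mem' := by
    rintro x y ⟨p1, w1, h1, hx⟩ ⟨p2, w2, h2, hy⟩
    exact ⟨p1*p2 - a*c*(w1*w2), p1*w2 + p2*w1 + b*(w1*w2),
      by linear_combination (p1^2 + b*p1*w1 + a*c*w1^2) * h2 + h1,
      by rw [Matrix.SpecialLinearGroup.coe_mul, hx, hy, Mm_mul]⟩
  inv_mem' := by
    rintro x ⟨p, w, h, hx⟩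
    exact ⟨p + b*w, -w, by linear_combination h,
      by rw [Matrix.SpecialLinearGroup.coe_inv, hx, Mm_adj]⟩

theorem descent (a b c t s p₀ d : ℤ) (T₀ : SL2) (hd : b^2 - 4*a*c = d)
    (hd5 : 5 ≤ d) (ht3 : 3 ≤ t) (hs : 0 < s)
    (hpell : t^2 - d*s^2 = 4)
    (hmin : ∀ t' s' : ℤ, 0 < t' → 0 < s' → t'^2 - d*s'^2 = 4 → t ≤ t')
    (hp₀ : 2*p₀ = t - b*s) (hP₀ : p₀^2 + b*p₀*s + a*c*s^2 = 1)
    (hT : (T₀ : Matrix (Fin 2) (Fin 2) ℤ) = Mm a b c p₀ s) :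
    ∀ n : ℕ, ∀ p w : ℤ, w ≤ (n:ℤ) → p^2 + b*p*w + a*c*w^2 = 1 → 0 ≤ w → 0 < 2*p + b*w →
      ∃ m : ℕ, Mm a b c p w = ((T₀^m : SL2) : Matrix (Fin 2) (Fin 2) ℤ) := by
  have base : ∀ p : ℤ, p^2 + b*p*0 + a*c*0^2 = 1 → 0 < 2*p + b*0 →
      ∃ m : ℕ, Mm a b c p 0 = ((T₀^m : SL2) : Matrix (Fin 2) (Fin 2) ℤ) := by
    intro p hP hu
    have hp2 : p^2 = 1 := by linear_combination hP
    have hle : p ≤ 1 := by nlinarith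
    have hge : -1 ≤ p := by nlinarith
    have hp1 : p = 1 := by omega
    subst hp1
    exact ⟨0, by rw [pow_zero, Matrix.SpecialLinearGroup.coe_one, Mm_one]⟩
  intro n
  induction n with
  | zero =>
    intro p w hw hP hw0 hu
    have : w = 0 := by omega
    subst this; exact base p hP hu
  | succ n ih =>
    intro p w hw hP hw0 hu
    rcases eq_or_lt_of_le hw0 with h0 | hwpos
    · rw [← h0] at hP hu ⊢; exact base p hP hu
    · obtain ⟨u, hudef⟩ : ∃ u, 2*p + b*w = u := ⟨_, rfl⟩
      rw [hudef] at hu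
      have hu2 : u^2 - d*w^2 = 4 := by rw [← hudef, ← hd]; linear_combination 4*hP
      have htu : t ≤ u := hmin u w hu hwpos hu2
      have ht2u2 : t^2 ≤ u^2 := by nlinarith
      have hws : s ≤ w := by
        by_contra hcon
        push_neg at hcon
        have h1 : 0 < s^2 - w^2 := by nlinarith
        have h2 : d*(s^2-w^2) = t^2 - u^2 := by linear_combination hu2 - hpell
        have h3 : 0 < d*(s^2-w^2) := mul_pos (by linarith) h1
        linarith
      obtain ⟨p', hp'⟩ : ∃ x, p*(p₀ + b*s) + a*c*(w*s) = x := ⟨_, rfl⟩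
      obtain ⟨w', hw'⟩ : ∃ x, w*p₀ - p*s = x := ⟨_, rfl⟩
      have hQ : (p₀+b*s)^2 + b*(p₀+b*s)*(-s) + a*c*s^2 = 1 := by linear_combination hP₀
      have hP' : p'^2 + b*p'*w' + a*c*w'^2 = 1 := by
        rw [← hp', ← hw']
        linear_combination ((p₀+b*s)^2 + b*(p₀+b*s)*(-s) + a*c*s^2) * hP + hQ
      have h2w' : 2*w' = w*t - u*s := by
        rw [← hw', ← hudef]; linear_combination w*hp₀
      have h2u' : 2*(2*p' + b*w') = u*t - d*(w*s) := by
        rw [← hp', ← hw', ← hudef, ← hd]; linear_combination (2*p + b*w)*hp₀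
      have hw'0 : 0 ≤ w' := by
        by_contra hcon
        push_neg at hcon
        have h1 : (w*t)^2 - (u*s)^2 = 4*(w^2 - s^2) := by
          linear_combination w^2*hpell - s^2*hu2
        have h2 : 0 < u*s - w*t := by linarith
        have h3 : 0 < u*s + w*t :=
          add_pos (mul_pos hu hs) (mul_pos hwpos (by linarith))
        nlinarith [mul_pos h2 h3]
      have hu' : 0 < 2*p' + b*w' := by
        have h1 : (u*t)^2 - (d*(w*s))^2 = 4*d*(w^2+s^2) + 16 := by
          linear_combination t^2*hu2 + (d*w^2+4)*hpell
        have h2 : 0 < u*t := mul_pos hu (by linarith)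
        by_contra hcon
        push_neg at hcon
        have h4 : 0 ≤ d*(w*s) - u*t := by linarith
        have h5 : 0 < d*(w*s) + u*t := by
          have : 0 < d*(w*s) := mul_pos (by linarith) (mul_pos hwpos hs)
          linarith
        nlinarith [mul_nonneg h4 (le_of_lt h5),
          mul_nonneg (by linarith : (0:ℤ) ≤ d) (by positivity : (0:ℤ) ≤ w^2 + s^2)]
      have hw'w : w' < w := by
        have h1 : (u*s)^2 - (w*(t-2))^2 = 4*s^2 + 4*w^2*(t-2) := by
          linear_combination s^2*hu2 - w^2*hpell
        have h2 : 0 < u*s := mul_pos hu hs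
        have h4 : w*(t-2) < u*s := by
          by_contra hcon
          push_neg at hcon
          have h5 : 0 ≤ w*(t-2) - u*s := by linarith
          have h6 : 0 < w*(t-2) + u*s := by
            have : 0 ≤ w*(t-2) := mul_nonneg (by linarith) (by linarith)
            linarith
          nlinarith [mul_nonneg h5 (le_of_lt h6), mul_pos hwpos hwpos, mul_pos hs hs,
            mul_nonneg (mul_nonneg (le_of_lt hwpos) (le_of_lt hwpos)) (by linarith : (0:ℤ) ≤ t-2)]
        linarith
      obtain ⟨m, hm⟩ := ih p' w' (by omega) hP' hw'0 hu'
      refine ⟨m+1, ?_⟩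
      have e1 : p'*p₀ - a*c*(w'*s) = p := by rw [← hp', ← hw']; linear_combination p*hP₀
      have e2 : p'*s + p₀*w' + b*(w'*s) = w := by rw [← hp', ← hw']; linear_combination w*hP₀
      have hsplit : Mm a b c p w = Mm a b c p' w' * Mm a b c p₀ s := by
        rw [Mm_mul, e1, e2]
      rw [hsplit, hm, ← hT, pow_succ, Matrix.SpecialLinearGroup.coe_mul]

theorem classify (a b c t s p₀ d : ℤ) (T₀ : SL2) (hd : b^2 - 4*a*c = d)
    (hd5 : 5 ≤ d) (ht3 : 3 ≤ t) (hs : 0 < s)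
    (hpell : t^2 - d*s^2 = 4)
    (hmin : ∀ t' s' : ℤ, 0 < t' → 0 < s' → t'^2 - d*s'^2 = 4 → t ≤ t')
    (hp₀ : 2*p₀ = t - b*s) (hP₀ : p₀^2 + b*p₀*s + a*c*s^2 = 1)
    (hT : (T₀ : Matrix (Fin 2) (Fin 2) ℤ) = Mm a b c p₀ s) :
    ∀ g : SL2, ∀ p w : ℤ, p^2 + b*p*w + a*c*w^2 = 1 →
      (g : Matrix (Fin 2) (Fin 2) ℤ) = Mm a b c p w →
      ∃ m : ℤ, g = T₀ ^ m ∨ g = -(T₀ ^ m) := by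
  have D := descent a b c t s p₀ d T₀ hd hd5 ht3 hs hpell hmin hp₀ hP₀ hT
  have case0 : ∀ g : SL2, ∀ p w : ℤ, p^2 + b*p*w + a*c*w^2 = 1 →
      (g : Matrix (Fin 2) (Fin 2) ℤ) = Mm a b c p w → 0 ≤ w →
      ∃ m : ℤ, g = T₀ ^ m ∨ g = -(T₀ ^ m) := by
    intro g p w hP hg hw0
    have hu2 : (2*p+b*w)^2 - d*w^2 = 4 := by rw [← hd]; linear_combination 4*hP
    have hune : 2*p + b*w ≠ 0 := by
      intro h
      rw [h] at hu2
      nlinarith [mul_nonneg (by linarith : (0:ℤ) ≤ d) (by positivity : (0:ℤ) ≤ w^2)]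
    rcases hune.lt_or_gt with hun | hup
    · have hcoe : ((-g⁻¹ : SL2) : Matrix (Fin 2) (Fin 2) ℤ) = Mm a b c (-(p + b*w)) w := by
        rw [Matrix.SpecialLinearGroup.coe_neg, Matrix.SpecialLinearGroup.coe_inv, hg, Mm_adj,
          Mm_neg, neg_neg]
      obtain ⟨m, hm⟩ := D w.toNat (-(p + b*w)) w (by omega) (by linear_combination hP) hw0
        (by linarith)
      have hgm : -g⁻¹ = T₀ ^ m := Subtype.coe_injective (hcoe.trans hm)
      refine ⟨-(m:ℤ), Or.inr ?_⟩
      have h1 : g⁻¹ = -(T₀^m) := by rw [← neg_neg (g⁻¹), hgm]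
      rw [← inv_inv g, h1, sl2_neg_inv, zpow_neg, zpow_natCast]
    · obtain ⟨m, hm⟩ := D w.toNat p w (by omega) hP hw0 hup
      exact ⟨(m:ℤ), Or.inl (by rw [zpow_natCast]; exact Subtype.coe_injective (hg.trans hm))⟩
  intro g p w hP hg
  rcases le_or_gt 0 w with hw0 | hwneg
  · exact case0 g p w hP hg hw0
  · have hcoe : ((g⁻¹ : SL2) : Matrix (Fin 2) (Fin 2) ℤ) = Mm a b c (p + b*w) (-w) := by
      rw [Matrix.SpecialLinearGroup.coe_inv, hg, Mm_adj]
    obtain ⟨m, hm | hm⟩ := case0 g⁻¹ (p + b*w) (-w) (by linear_combination hP) hcoe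
      (by linarith)
    · exact ⟨-m, Or.inl (by rw [← inv_inv g, hm, zpow_neg])⟩
    · refine ⟨-m, Or.inr ?_⟩
      rw [← inv_inv g, hm, sl2_neg_inv, zpow_neg]

theorem pow_shape (a b c t s p₀ d : ℤ) (T₀ : SL2) (hd : b^2 - 4*a*c = d)
    (hd5 : 5 ≤ d) (ht3 : 3 ≤ t) (hs : 0 < s)
    (hp₀ : 2*p₀ = t - b*s) (hP₀ : p₀^2 + b*p₀*s + a*c*s^2 = 1)
    (hT : (T₀ : Matrix (Fin 2) (Fin 2) ℤ) = Mm a b c p₀ s) :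
    ∀ m : ℕ, ∃ p w : ℤ, p^2 + b*p*w + a*c*w^2 = 1 ∧ 0 < w ∧ 0 < 2*p + b*w ∧
      ((T₀^(m+1) : SL2) : Matrix (Fin 2) (Fin 2) ℤ) = Mm a b c p w := by
  intro m
  induction m with
  | zero => exact ⟨p₀, s, hP₀, hs, by linarith [hp₀], by rw [pow_one, hT]⟩
  | succ m ih =>
    obtain ⟨p, w, hP, hw, hu, hm⟩ := ih
    refine ⟨p*p₀ - a*c*(w*s), p*s + p₀*w + b*(w*s), ?_, ?_, ?_, ?_⟩
    · linear_combination (p₀^2 + b*p₀*s + a*c*s^2) * hP + hP₀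
    · have h1 : 2*(p*s + p₀*w + b*(w*s)) = s*(2*p + b*w) + w*t := by
        linear_combination w*hp₀
      nlinarith [mul_pos hs hu, mul_pos hw (by linarith : (0:ℤ) < t)]
    · have h1 : 2*(2*(p*p₀ - a*c*(w*s)) + b*(p*s + p₀*w + b*(w*s)))
          = (2*p + b*w)*t + d*(w*s) := by
        rw [← hd]; linear_combination (2*p + b*w)*hp₀
      nlinarith [mul_pos hu (by linarith : (0:ℤ) < t),
        mul_pos (by linarith : (0:ℤ) < d) (mul_pos hw hs)]
    · rw [pow_succ, Matrix.SpecialLinearGroup.coe_mul, hm, hT, Mm_mul]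

theorem inf_order (a b c t s p₀ d : ℤ) (T₀ : SL2) (hd : b^2 - 4*a*c = d)
    (hd5 : 5 ≤ d) (ht3 : 3 ≤ t) (hs : 0 < s) (ha : a ≠ 0)
    (hp₀ : 2*p₀ = t - b*s) (hP₀ : p₀^2 + b*p₀*s + a*c*s^2 = 1)
    (hT : (T₀ : Matrix (Fin 2) (Fin 2) ℤ) = Mm a b c p₀ s) :
    ∀ m : ℤ, m ≠ 0 → T₀ ^ m ≠ 1 := by
  have key : ∀ k : ℕ, T₀ ^ (k+1) ≠ 1 := by
    intro k hcontra
    obtain ⟨p, w, hP, hw, hu, hm⟩ := pow_shape a b c t s p₀ d T₀ hd hd5 ht3 hs hp₀ hP₀ hT k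
    rw [hcontra, Matrix.SpecialLinearGroup.coe_one] at hm
    have h10 := congrFun (congrFun hm 1) 0
    simp [Mm, Matrix.one_apply] at h10
    rcases h10 with h | h
    · exact ha h
    · omega
  intro m hm hcontra
  rcases lt_or_gt_of_ne hm with hneg | hpos
  · have h1 : T₀ ^ (-m) = 1 := by rw [zpow_neg, hcontra, inv_one]
    obtain ⟨k, hk⟩ : ∃ k : ℕ, -m = (k:ℤ)+1 := ⟨(-m-1).toNat, by omega⟩
    rw [hk] at h1
    exact key k (by rw [← zpow_natCast T₀ (k+1), Nat.cast_add, Nat.cast_one]; exact h1)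
  · obtain ⟨k, hk⟩ : ∃ k : ℕ, m = (k:ℤ)+1 := ⟨(m-1).toNat, by omega⟩
    rw [hk] at hcontra
    exact key k (by rw [← zpow_natCast T₀ (k+1), Nat.cast_add, Nat.cast_one]; exact hcontra)

theorem stab_shape (a b c : ℤ) (hprim : Int.gcd a (Int.gcd b c) = 1)
    (g : SL2) (hg : actForm g (a, b, c) = (a, b, c)) :
    ∃ p w : ℤ, p^2 + b*p*w + a*c*w^2 = 1 ∧
      (g : Matrix (Fin 2) (Fin 2) ℤ) = Mm a b c p w := by
  obtain ⟨x, y, z, hbez⟩ : ∃ x y z : ℤ, a*x + b*y + c*z = 1 := by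
    have h1 := Int.gcd_eq_gcd_ab a (Int.gcd b c : ℤ)
    have h2 := Int.gcd_eq_gcd_ab b c
    rw [hprim] at h1
    push_cast at h1
    exact ⟨Int.gcdA a (Int.gcd b c : ℤ), Int.gcdA b c * Int.gcdB a (Int.gcd b c : ℤ),
      Int.gcdB b c * Int.gcdB a (Int.gcd b c : ℤ),
      by linear_combination h1.symm - Int.gcdB a (Int.gcd b c : ℤ) * h2⟩
  set P : ℤ := (g : Matrix (Fin 2) (Fin 2) ℤ) 0 0 with hPdef
  set Q : ℤ := (g : Matrix (Fin 2) (Fin 2) ℤ) 0 1 with hQdef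
  set R : ℤ := (g : Matrix (Fin 2) (Fin 2) ℤ) 1 0 with hRdef
  set S : ℤ := (g : Matrix (Fin 2) (Fin 2) ℤ) 1 1 with hSdef
  have e4 : P * S - Q * R = 1 := by
    have := g.2
    rw [Matrix.det_fin_two] at this
    exact this
  have e1 : a * P ^ 2 + b * P * R + c * R ^ 2 = a := congrArg Prod.fst hg
  have e2 : 2 * a * P * Q + b * (P * S + Q * R) + 2 * c * R * S = b :=
    congrArg (fun v => v.2.1) hg
  have e3 : a * Q ^ 2 + b * Q * S + c * S ^ 2 = c := congrArg (fun v => v.2.2) hg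
  have h1 : P*(b*R - a*(S-P)) + R*(a*Q + c*R) = 0 := by linear_combination e1 - a*e4
  have h2' : S*(a*Q + c*R) + Q*(b*R - a*(S-P)) = 0 := by
    have h2 : 2*(S*(a*Q + c*R) + Q*(b*R - a*(S-P))) = 0 := by linear_combination e2 - b*e4
    linarith
  have h3 : S*(b*Q + c*(S-P)) + Q*(a*Q + c*R) = 0 := by linear_combination e3 - c*e4
  have h4' : P*(a*Q + c*R) + R*(b*Q + c*(S-P)) = 0 := by
    have h4 : 2*(P*(a*Q + c*R) + R*(b*Q + c*(S-P))) = 0 := by linear_combination e2 - b*e4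
    linarith
  have hX : a*Q + c*R = 0 := by linear_combination P*h2' - Q*h1 - (a*Q + c*R)*e4
  have hY : b*R - a*(S-P) = 0 := by linear_combination S*h1 - R*h2' - (b*R - a*(S-P))*e4
  have hZ : b*Q + c*(S-P) = 0 := by linear_combination P*h3 - Q*h4' - (b*Q + c*(S-P))*e4
  have hr : R = a*(x*R + y*(S-P) - z*Q) := by linear_combination (-R)*hbez + y*hY + z*hX
  have hq : Q = -(c*(x*R + y*(S-P) - z*Q)) := by linear_combination (-Q)*hbez + x*hX + y*hZ
  have hsp : S - P = b*(x*R + y*(S-P) - z*Q) := by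
    linear_combination (-(S-P))*hbez + (-x)*hY + z*hZ
  obtain ⟨w, hw⟩ : ∃ w, x*R + y*(S-P) - z*Q = w := ⟨_, rfl⟩
  rw [hw] at hr hq hsp
  have hS' : S = P + b*w := by linarith
  refine ⟨P, w, by linear_combination e4 - P*hsp - (c*w)*hr + R*hq, ?_⟩
  have heta : (g : Matrix (Fin 2) (Fin 2) ℤ) = !![P, Q; R, S] := Matrix.eta_fin_two _
  rw [heta, hq, hr, hS', Mm]

end Lemma8Aux

open Lemma8Aux in
/-- **Lemma 8 (automorphs of an indefinite form).** Let `Q = [a,b,c]` be a primitive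
indefinite integral binary quadratic form whose discriminant `d = b² - 4ac > 0` is not a
perfect square, and let `(t, s)` be the minimal positive solution of `t² - d s² = 4`.
Then the matrix `T₀ = ((t-bs)/2, -cs; as, (t+bs)/2)` lies in `SL₂(ℤ)`, has infinite
order, and the stabilizer of `Q` in `SL₂(ℤ)` is exactly `{± T₀^m : m ∈ ℤ}` (so it is
isomorphic to `ℤ/2ℤ × ℤ`, generated by `-I` and `T₀`). -/
theorem stabilizer_indefinite (a b c : ℤ) (hprim : Int.gcd a (Int.gcd b c) = 1)
    (hd : 0 < b ^ 2 - 4 * a * c) (hns : ¬∃ r : ℤ, r ^ 2 = b ^ 2 - 4 * a * c)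
    (t s : ℤ) (ht : 0 < t) (hs : 0 < s)
    (hpell : t ^ 2 - (b ^ 2 - 4 * a * c) * s ^ 2 = 4)
    (hmin : ∀ t' s' : ℤ, 0 < t' → 0 < s' →
      t' ^ 2 - (b ^ 2 - 4 * a * c) * s' ^ 2 = 4 → t ≤ t') :
    ∃ T₀ : Matrix.SpecialLinearGroup (Fin 2) ℤ,
      (T₀ : Matrix (Fin 2) (Fin 2) ℤ) = !![(t - b * s) / 2, -c * s; a * s, (t + b * s) / 2] ∧
      (∀ m : ℤ, m ≠ 0 → T₀ ^ m ≠ 1) ∧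
      {g : Matrix.SpecialLinearGroup (Fin 2) ℤ | actForm g (a, b, c) = (a, b, c)} =
        {g : Matrix.SpecialLinearGroup (Fin 2) ℤ | ∃ m : ℤ,
          (g : Matrix (Fin 2) (Fin 2) ℤ) = ((T₀ ^ m : Matrix.SpecialLinearGroup (Fin 2) ℤ) : Matrix (Fin 2) (Fin 2) ℤ) ∨
          (g : Matrix (Fin 2) (Fin 2) ℤ) = -((T₀ ^ m : Matrix.SpecialLinearGroup (Fin 2) ℤ) : Matrix (Fin 2) (Fin 2) ℤ)} := by
  -- a ≠ 0
  have ha : a ≠ 0 := by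
    intro h
    exact hns ⟨b, by rw [h]; ring⟩
  -- d ≥ 5
  have hd5 : 5 ≤ b^2 - 4*a*c := by
    have h1 : b^2 % 4 = 0 ∨ b^2 % 4 = 1 := by
      rcases Int.even_or_odd b with ⟨k, hk⟩ | ⟨k, hk⟩
      · left
        obtain ⟨K, hK⟩ : ∃ K, b^2 = 4*K := ⟨k^2, by rw [hk]; ring⟩
        rw [hK]; exact Int.mul_emod_right 4 K
      · right
        obtain ⟨K, hK⟩ : ∃ K, b^2 = 4*K + 1 := ⟨k^2 + k, by rw [hk]; ring⟩
        rw [hK]; omega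
    by_contra hlt
    push_neg at hlt
    obtain ⟨E, hE⟩ : ∃ E, a*c = E := ⟨_, rfl⟩
    obtain ⟨F, hF⟩ : ∃ F, b^2 = F := ⟨_, rfl⟩
    have hd' : 0 < F - 4*E := by rw [← hE, ← hF]; linarith
    have hlt' : F - 4*E < 5 := by rw [← hE, ← hF]; linarith
    rw [hF] at h1
    have hcon : b^2 - 4*a*c = F - 4*E := by linarith
    have h14 : b^2 - 4*a*c = 1 ∨ b^2 - 4*a*c = 4 := by
      rw [hcon]; omega
    rcases h14 with h | h
    · exact hns ⟨1, by rw [h]; norm_num⟩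
    · exact hns ⟨2, by rw [h]; norm_num⟩
  -- t ≥ 3
  have ht3 : 3 ≤ t := by
    have hs2 : 1 ≤ s^2 := by nlinarith
    have h9 : 9 ≤ t^2 := by nlinarith
    nlinarith
  -- parity: 2 ∣ t - b*s
  have heven : Even (t^2 - (b*s)^2) := ⟨2 - 2*(a*c*s^2), by linear_combination hpell⟩
  have hpar : Even (t - b*s) := by
    rw [Int.even_sub]
    have h2 := Int.even_sub.mp heven
    constructor
    · intro hEt
      have : Even ((b*s)^2) := h2.mp (Int.even_pow.mpr ⟨hEt, by norm_num⟩)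
      exact (Int.even_pow.mp this).1
    · intro hEbs
      have : Even (t^2) := h2.mpr (Int.even_pow.mpr ⟨hEbs, by norm_num⟩)
      exact (Int.even_pow.mp this).1
  obtain ⟨p₀, hp₀⟩ : ∃ p₀, t - b*s = 2*p₀ := by
    obtain ⟨k, hk⟩ := hpar; exact ⟨k, by linarith⟩
  have hp₀' : 2*p₀ = t - b*s := hp₀.symm
  have hP₀ : p₀^2 + b*p₀*s + a*c*s^2 = 1 := by
    have h4 : 4*(p₀^2 + b*p₀*s + a*c*s^2) = 4*1 := by
      linear_combination hpell + (2*p₀ + t + b*s) * hp₀'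
    linarith
  have hdiv1 : (t - b*s)/2 = p₀ := by
    rw [hp₀]; exact Int.mul_ediv_cancel_left _ two_ne_zero
  have hdiv2 : (t + b*s)/2 = p₀ + b*s := by
    rw [show t + b*s = 2*(p₀ + b*s) by linarith]
    exact Int.mul_ediv_cancel_left _ two_ne_zero
  have hdet : (Mm a b c p₀ s).det = 1 := by rw [Mm_det]; exact hP₀
  refine ⟨⟨Mm a b c p₀ s, hdet⟩, ?_, ?_, ?_⟩
  · show Mm a b c p₀ s = _
    rw [Mm, hdiv1, hdiv2, neg_mul]
  · exact inf_order a b c t s p₀ (b^2-4*a*c) (⟨Mm a b c p₀ s, hdet⟩ : SL2) rfl hd5 ht3 hs ha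
      hp₀' hP₀ rfl
  · ext g
    simp only [Set.mem_setOf_eq]
    constructor
    · intro hg
      obtain ⟨p, w, hP, hgM⟩ := stab_shape a b c hprim g hg
      obtain ⟨m, h | h⟩ := classify a b c t s p₀ (b^2-4*a*c) (⟨Mm a b c p₀ s, hdet⟩ : SL2)
        rfl hd5 ht3 hs hpell hmin hp₀' hP₀ rfl g p w hP hgM
      · exact ⟨m, Or.inl (by rw [h])⟩
      · exact ⟨m, Or.inr (by rw [h, Matrix.SpecialLinearGroup.coe_neg])⟩
    · rintro ⟨m, hm⟩
      have hT₀mem : (⟨Mm a b c p₀ s, hdet⟩ : SL2) ∈ Hgrp a b c :=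
        ⟨p₀, s, hP₀, rfl⟩
      obtain ⟨p, w, hP, hMm⟩ := Subgroup.zpow_mem (Hgrp a b c) hT₀mem m
      rcases hm with hm | hm
      · exact act_Mm a b c p w hP g (hm.trans hMm)
      · exact act_Mm a b c (-p) (-w) (by linear_combination hP) g
          (by rw [hm, hMm, Mm_neg])
end

section
/- Let k be a positive integer. Every integral binary quadratic form of discriminant 4k² is properly equivalent to exactly one of the forms [0, 2k, c] with c ∈ {0, 1, …, 2k−1}. In particular, there are exactly 2k proper SL₂(ℤ)-equivalence classes of integral binary quadratic forms of discriminant 4k². -/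
open Filter Real Asymptotics

def mkg (p q r s : ℤ) (h : p * s - q * r = 1) : Matrix.SpecialLinearGroup (Fin 2) ℤ :=
  ⟨!![p, q; r, s], by simpa [Matrix.det_fin_two_of] using h⟩

lemma actForm_mkg (p q r s : ℤ) (h : p * s - q * r = 1) (a b c : ℤ) :
    actForm (mkg p q r s h) (a, b, c) =
      (a * p ^ 2 + b * p * r + c * r ^ 2,
       2 * a * p * q + b * (p * s + q * r) + 2 * c * r * s,
       a * q ^ 2 + b * q * s + c * s ^ 2) := by
  simp [actForm, mkg]

lemma det_entries (g : Matrix.SpecialLinearGroup (Fin 2) ℤ) :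
    (g : Matrix (Fin 2) (Fin 2) ℤ) 0 0 * (g : Matrix (Fin 2) (Fin 2) ℤ) 1 1
      - (g : Matrix (Fin 2) (Fin 2) ℤ) 0 1 * (g : Matrix (Fin 2) (Fin 2) ℤ) 1 0 = 1 := by
  have := g.2
  rwa [Matrix.det_fin_two] at this

lemma actForm_mul (g h : Matrix.SpecialLinearGroup (Fin 2) ℤ) (Q : ℤ × ℤ × ℤ) :
    actForm (g * h) Q = actForm h (actForm g Q) := by
  obtain ⟨a, b, c⟩ := Q
  simp only [actForm, Matrix.SpecialLinearGroup.coe_mul, Matrix.mul_apply, Fin.sum_univ_two,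
    Prod.mk.injEq]
  refine ⟨by ring, by ring, by ring⟩

lemma actForm_one (Q : ℤ × ℤ × ℤ) : actForm 1 Q = Q := by
  simp [actForm]

lemma pe_refl (Q : ℤ × ℤ × ℤ) : ProperEquiv Q Q := ⟨1, actForm_one Q⟩

lemma pe_symm {Q Q' : ℤ × ℤ × ℤ} (h : ProperEquiv Q Q') : ProperEquiv Q' Q := by
  obtain ⟨g, hg⟩ := h
  exact ⟨g⁻¹, by rw [← hg, ← actForm_mul, mul_inv_cancel, actForm_one]⟩

lemma pe_trans {Q Q' Q'' : ℤ × ℤ × ℤ} (h : ProperEquiv Q Q') (h' : ProperEquiv Q' Q'') :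
    ProperEquiv Q Q'' := by
  obtain ⟨g, hg⟩ := h; obtain ⟨g', hg'⟩ := h'
  exact ⟨g * g', by rw [actForm_mul, hg, hg']⟩

lemma pe_disc {Q Q' : ℤ × ℤ × ℤ} (h : ProperEquiv Q Q') :
    Q'.2.1 ^ 2 - 4 * Q'.1 * Q'.2.2 = Q.2.1 ^ 2 - 4 * Q.1 * Q.2.2 := by
  obtain ⟨g, hg⟩ := h
  rw [← hg]; exact disc_actForm g Q

lemma equiv_zero_of_root (a b c p r : ℤ) (hgcd : Int.gcd p r = 1)
    (h0 : a * p ^ 2 + b * p * r + c * r ^ 2 = 0) :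
    ∃ b' c', ProperEquiv (a, b, c) (0, b', c') := by
  obtain ⟨u, v, huv⟩ := Int.isCoprime_iff_gcd_eq_one.mpr hgcd
  refine ⟨2 * a * p * (-v) + b * (p * u + (-v) * r) + 2 * c * r * u,
    a * (-v) ^ 2 + b * (-v) * u + c * u ^ 2,
    mkg p (-v) r u (by linear_combination huv), ?_⟩
  rw [actForm_mkg, h0]

lemma exists_zero_first (a b c k : ℤ) (ha : a ≠ 0) (hk : 0 < k)
    (hd : b ^ 2 - 4 * a * c = 4 * k ^ 2) :
    ∃ b' c', ProperEquiv (a, b, c) (0, b', c') := by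
  set p₀ : ℤ := 2 * k - b with hp₀
  set r₀ : ℤ := 2 * a with hr₀
  have hr0 : r₀ ≠ 0 := by simp only [hr₀]; intro h; omega
  have hdpos : 0 < Int.gcd p₀ r₀ := Int.gcd_pos_of_ne_zero_right p₀ hr0
  set d : ℤ := (Int.gcd p₀ r₀ : ℤ) with hdd
  have hd0 : d ≠ 0 := by simp only [hdd]; exact_mod_cast hdpos.ne'
  set p : ℤ := p₀ / d with hp
  set r : ℤ := r₀ / d with hr
  have hpd : p₀ = d * p := (Int.mul_ediv_cancel' (Int.gcd_dvd_left _ _)).symm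
  have hrd : r₀ = d * r := (Int.mul_ediv_cancel' (Int.gcd_dvd_right _ _)).symm
  have hgcd1 : Int.gcd p r = 1 := Int.gcd_div_gcd_div_gcd hdpos
  have hroot : a * p₀ ^ 2 + b * p₀ * r₀ + c * r₀ ^ 2 = 0 := by
    simp only [hp₀, hr₀]; linear_combination (-a) * hd
  have hroot' : a * p ^ 2 + b * p * r + c * r ^ 2 = 0 := by
    have : d ^ 2 * (a * p ^ 2 + b * p * r + c * r ^ 2) = 0 := by
      rw [hpd, hrd] at hroot; linear_combination hroot
    have h2 : d ^ 2 ≠ 0 := pow_ne_zero 2 hd0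
    exact (mul_eq_zero.mp this).resolve_left h2
  exact equiv_zero_of_root a b c p r hgcd1 hroot'

lemma flip_b (B C : ℤ) (hB : B ≠ 0) : ∃ C', ProperEquiv (0, B, C) (0, -B, C') := by
  have hgpos : 0 < Int.gcd C B := Int.gcd_pos_of_ne_zero_right C hB
  set g : ℤ := (Int.gcd C B : ℤ) with hgg
  set p : ℤ := C / g with hp
  set r : ℤ := -(B / g) with hr
  have hdC : g ∣ C := Int.gcd_dvd_left _ _
  have hdB : g ∣ B := Int.gcd_dvd_right _ _
  have hgcd1 : Int.gcd p r = 1 := by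
    rw [hr, Int.gcd, Int.natAbs_neg, ← Int.gcd]
    exact Int.gcd_div_gcd_div_gcd hgpos
  have h1 : B * C / g = B * (C / g) := Int.mul_ediv_assoc B hdC
  have h2 : C * B / g = C * (B / g) := Int.mul_ediv_assoc C hdB
  have key : B * p + C * r = 0 := by
    simp only [hp, hr, mul_neg]
    rw [← h1, ← h2, mul_comm B C]; ring
  obtain ⟨u, v, huv⟩ := Int.isCoprime_iff_gcd_eq_one.mpr hgcd1
  refine ⟨0 * (-v) ^ 2 + B * (-v) * u + C * u ^ 2,
    mkg p (-v) r u (by linear_combination huv), ?_⟩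
  rw [actForm_mkg, Prod.mk.injEq, Prod.mk.injEq]
  exact ⟨by linear_combination r * key, by linear_combination 2 * u * key - B * huv, rfl⟩

lemma translate_c (B C t : ℤ) : ProperEquiv (0, B, C) (0, B, C + B * t) := by
  refine ⟨mkg 1 t 0 1 (by ring), ?_⟩
  rw [actForm_mkg, Prod.mk.injEq, Prod.mk.injEq]
  exact ⟨by ring, by ring, by ring⟩

lemma normalize_form (B C k : ℤ) (hk : 0 < k) (hB : B ^ 2 = 4 * k ^ 2) :
    ∃ C', 0 ≤ C' ∧ C' < 2 * k ∧ ProperEquiv (0, B, C) (0, 2 * k, C') := by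
  have h2k : (0 : ℤ) < 2 * k := by omega
  have hcase : B = 2 * k ∨ B = -(2 * k) := by
    have : (B - 2 * k) * (B + 2 * k) = 0 := by linear_combination hB
    rcases mul_eq_zero.mp this with h | h
    · left; omega
    · right; omega
  have step : ∃ C₀, ProperEquiv (0, B, C) (0, 2 * k, C₀) := by
    rcases hcase with h | h
    · exact ⟨C, h ▸ pe_refl _⟩
    · obtain ⟨C', hC'⟩ := flip_b B C (by omega)
      rw [show -B = 2 * k by omega] at hC'
      exact ⟨C', hC'⟩
  obtain ⟨C₀, hC₀⟩ := step
  refine ⟨C₀ % (2 * k), Int.emod_nonneg C₀ (by omega), Int.emod_lt_of_pos C₀ h2k, ?_⟩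
  have := pe_trans hC₀ (translate_c (2 * k) C₀ (-(C₀ / (2 * k))))
  have heq : C₀ + 2 * k * -(C₀ / (2 * k)) = C₀ % (2 * k) := by
    rw [Int.emod_def]; ring
  rwa [heq] at this

lemma unique_c (k c c' : ℤ) (hk : 0 < k)
    (h : ProperEquiv (0, 2 * k, c) (0, 2 * k, c'))
    (hc0 : 0 ≤ c) (hc2 : c < 2 * k) (hc'0 : 0 ≤ c') (hc'2 : c' < 2 * k) : c = c' := by
  obtain ⟨g, hg⟩ := h
  have hdet := det_entries g
  simp only [actForm, Prod.mk.injEq] at hg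
  obtain ⟨e1, e2, e3⟩ := hg
  set p := (g : Matrix (Fin 2) (Fin 2) ℤ) 0 0 with hp
  set q := (g : Matrix (Fin 2) (Fin 2) ℤ) 0 1 with hq
  set r := (g : Matrix (Fin 2) (Fin 2) ℤ) 1 0 with hr
  set s := (g : Matrix (Fin 2) (Fin 2) ℤ) 1 1 with hs
  by_cases hr0 : r = 0
  · rw [hr0] at hdet
    have hps : p * s = 1 := by linarith
    have hdvd : 2 * k ∣ c' - c := by
      rcases Int.mul_eq_one_iff_eq_one_or_neg_one.mp hps with ⟨hp1, hs1⟩ | ⟨hp1, hs1⟩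
      · exact ⟨q, by rw [hs1] at e3; linarith⟩
      · exact ⟨-q, by rw [hs1] at e3; linarith⟩
    have habs : |c' - c| < 2 * k := by rw [abs_lt]; omega
    have := Int.eq_zero_of_abs_lt_dvd hdvd habs
    omega
  · exfalso
    have hsplit : r * (2 * k * q + c * s) = 0 := by
      have h2 : 2 * (r * (2 * k * q + c * s)) = 0 := by
        linear_combination e2 - 2 * k * hdet
      linarith
    have hsplit1 : r * (2 * k * p + c * r) = 0 := by linear_combination e1
    have hkey : 2 * k * q + c * s = 0 := (mul_eq_zero.mp hsplit).resolve_left hr0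
    have hkey1 : 2 * k * p + c * r = 0 := (mul_eq_zero.mp hsplit1).resolve_left hr0
    have : 2 * k = 0 := by linear_combination s * hkey1 - r * hkey - 2 * k * hdet
    omega

/-- **Classes of square discriminant.** For a positive integer `k`, every integral binary
quadratic form of discriminant `4k²` is properly equivalent to exactly one of the forms
`[0, 2k, c]` with `c ∈ {0, 1, …, 2k-1}`; in particular there are exactly `2k` proper
`SL₂(ℤ)`-equivalence classes of forms of discriminant `4k²`. -/
theorem classes_square_discriminant (k : ℕ) (hk : 0 < k) :
    ∀ Q : ℤ × ℤ × ℤ, Q.2.1 ^ 2 - 4 * Q.1 * Q.2.2 = 4 * (k : ℤ) ^ 2 →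
      ∃! c : ℤ, 0 ≤ c ∧ c < 2 * (k : ℤ) ∧ ProperEquiv Q (0, 2 * (k : ℤ), c) := by
  intro Q hQ
  obtain ⟨a, b, c⟩ := Q
  have hk' : (0 : ℤ) < (k : ℤ) := by exact_mod_cast hk
  have hQ' : b ^ 2 - 4 * a * c = 4 * (k : ℤ) ^ 2 := hQ
  have hzero : ∃ B C₁, ProperEquiv (a, b, c) (0, B, C₁) := by
    by_cases ha : a = 0
    · subst ha; exact ⟨b, c, pe_refl _⟩
    · exact exists_zero_first a b c k ha hk' hQ'
  obtain ⟨B, C₁, hBC⟩ := hzero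
  have hd2 : B ^ 2 - 4 * 0 * C₁ = b ^ 2 - 4 * a * c := pe_disc hBC
  have hB2 : B ^ 2 = 4 * (k : ℤ) ^ 2 := by linear_combination hd2 + hQ'
  obtain ⟨C', h0, h2, hEq⟩ := normalize_form B C₁ (k : ℤ) hk' hB2
  refine ⟨C', ⟨h0, h2, pe_trans hBC hEq⟩, ?_⟩
  rintro c' ⟨h0', h2', hEq'⟩
  exact unique_c (k : ℤ) c' C' hk' (pe_trans (pe_symm hEq') (pe_trans hBC hEq)) h0' h2' h0 h2
end
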